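/- Let V ~ Uniform(0,1) and define U1 = V, U2 = V + (1/2)·1_{[0,1/2]}(V) - (1/2)·1_{(1/2,1]}(V), U3 = -2V + 1_{[0,1/2]}(V) + 2·1_{(1/2,1]}(V). Then each of U1, U2, U3 is uniform on [0,1] and U1 + U2 + U3 = 3/2 almost surely. -/
import Mathlib


open MeasureTheory Set

/-- Gluing lemma: measures of the two half pieces add up. -/
lemma gr_glue (s : Set ℝ) (hs : MeasurableSet s) :
    volume (s ∩ Icc (1/2:ℝ) 1) + volume (s ∩ Ioc (0:ℝ) (1/2)) = volume (s ∩ Icc 0 1) := by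
  have hdisj : (s ∩ Icc (1/2:ℝ) 1) ∩ (s ∩ Ioc (0:ℝ) (1/2)) ⊆ {(1/2:ℝ)} := by
    rintro x ⟨⟨-, hx1, -⟩, ⟨-, -, hx2⟩⟩
    exact mem_singleton_iff.2 (le_antisymm hx2 hx1)
  have hnull : volume ((s ∩ Icc (1/2:ℝ) 1) ∩ (s ∩ Ioc (0:ℝ) (1/2))) = 0 :=
    measure_mono_null hdisj (by simp)
  have hunion : (s ∩ Icc (1/2:ℝ) 1) ∪ (s ∩ Ioc (0:ℝ) (1/2)) = s ∩ Ioc 0 1 := by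
    rw [← inter_union_distrib_left]
    congr 1
    ext x
    simp only [mem_union, mem_Icc, mem_Ioc]
    constructor
    · rintro (⟨h1, h2⟩ | ⟨h1, h2⟩) <;> constructor <;> linarith
    · rintro ⟨h1, h2⟩
      rcases le_or_gt (1/2 : ℝ) x with h | h
      · exact Or.inl ⟨h, h2⟩
      · exact Or.inr ⟨h1, h.le⟩
  calc volume (s ∩ Icc (1/2:ℝ) 1) + volume (s ∩ Ioc (0:ℝ) (1/2))
      = volume ((s ∩ Icc (1/2:ℝ) 1) ∪ (s ∩ Ioc (0:ℝ) (1/2)))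
        + volume ((s ∩ Icc (1/2:ℝ) 1) ∩ (s ∩ Ioc (0:ℝ) (1/2))) :=
        (measure_union_add_inter _ (hs.inter measurableSet_Ioc)).symm
    _ = volume (s ∩ Ioc (0:ℝ) 1) := by rw [hnull, hunion, add_zero]
    _ = volume (s ∩ Icc 0 1) := measure_congr ((ae_eq_refl s).inter Ioc_ae_eq_Icc)

/-- The second map preserves the uniform distribution on `[0,1]`. -/
lemma gr_map2 :
    (volume.restrict (Icc (0:ℝ) 1)).map
      (fun v => v + (1/2) * (Icc (0:ℝ) (1/2)).indicator (fun _ => (1:ℝ)) v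
        - (1/2) * (Ioc (1/2 : ℝ) 1).indicator (fun _ => (1:ℝ)) v)
      = volume.restrict (Icc (0:ℝ) 1) := by
  set f : ℝ → ℝ := fun v => v + (1/2) * (Icc (0:ℝ) (1/2)).indicator (fun _ => (1:ℝ)) v
        - (1/2) * (Ioc (1/2 : ℝ) 1).indicator (fun _ => (1:ℝ)) v with hf
  have hfm : Measurable f :=
    (measurable_id.add (measurable_const.mul
      (measurable_const.indicator measurableSet_Icc))).sub
      (measurable_const.mul (measurable_const.indicator measurableSet_Ioc))
  ext s hs
  rw [Measure.map_apply hfm hs, Measure.restrict_apply (hfm hs), Measure.restrict_apply hs]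
  have hset : f ⁻¹' s ∩ Icc 0 1 =
      ((fun x => x + (1/2:ℝ)) ⁻¹' (s ∩ Icc (1/2) 1)) ∪
      ((fun x => x + (-(1/2):ℝ)) ⁻¹' (s ∩ Ioc 0 (1/2))) := by
    ext v
    simp only [mem_inter_iff, mem_preimage, mem_Icc, mem_union, mem_Ioc, hf]
    constructor
    · rintro ⟨hfs, h0, h1⟩
      rcases le_or_gt v (1/2) with hv | hv
      · have hA : (Icc (0:ℝ) (1/2)).indicator (fun _ => (1:ℝ)) v = 1 :=
          indicator_of_mem (mem_Icc.2 ⟨h0, hv⟩) _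
        have hB : (Ioc (1/2:ℝ) 1).indicator (fun _ => (1:ℝ)) v = 0 :=
          indicator_of_notMem (fun h => absurd h.1 (not_lt.2 hv)) _
        rw [hA, hB] at hfs
        have : v + 1/2 * 1 - 1/2 * 0 = v + 1/2 := by ring
        rw [this] at hfs
        exact Or.inl ⟨hfs, by linarith, by linarith⟩
      · have hA : (Icc (0:ℝ) (1/2)).indicator (fun _ => (1:ℝ)) v = 0 :=
          indicator_of_notMem (fun h => absurd h.2 (not_le.2 hv)) _
        have hB : (Ioc (1/2:ℝ) 1).indicator (fun _ => (1:ℝ)) v = 1 :=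
          indicator_of_mem (mem_Ioc.2 ⟨hv, h1⟩) _
        rw [hA, hB] at hfs
        have : v + 1/2 * 0 - 1/2 * 1 = v + -(1/2) := by ring
        rw [this] at hfs
        exact Or.inr ⟨hfs, by linarith, by linarith⟩
    · rintro (⟨hvs, h1, h2⟩ | ⟨hvs, h1, h2⟩)
      · have h0 : 0 ≤ v := by linarith
        have hv : v ≤ 1/2 := by linarith
        have hA : (Icc (0:ℝ) (1/2)).indicator (fun _ => (1:ℝ)) v = 1 :=
          indicator_of_mem (mem_Icc.2 ⟨h0, hv⟩) _
        have hB : (Ioc (1/2:ℝ) 1).indicator (fun _ => (1:ℝ)) v = 0 :=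
          indicator_of_notMem (fun h => absurd h.1 (not_lt.2 hv)) _
        rw [hA, hB]
        have : v + 1/2 * 1 - 1/2 * 0 = v + 1/2 := by ring
        rw [this]
        exact ⟨hvs, h0, by linarith⟩
      · have hv : 1/2 < v := by linarith
        have h1' : v ≤ 1 := by linarith
        have hA : (Icc (0:ℝ) (1/2)).indicator (fun _ => (1:ℝ)) v = 0 :=
          indicator_of_notMem (fun h => absurd h.2 (not_le.2 hv)) _
        have hB : (Ioc (1/2:ℝ) 1).indicator (fun _ => (1:ℝ)) v = 1 :=
          indicator_of_mem (mem_Ioc.2 ⟨hv, h1'⟩) _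
        rw [hA, hB]
        have : v + 1/2 * 0 - 1/2 * 1 = v + -(1/2) := by ring
        rw [this]
        exact ⟨hvs, by linarith, h1'⟩
  rw [hset]
  have hdisj : Disjoint ((fun x => x + (1/2:ℝ)) ⁻¹' (s ∩ Icc (1/2) 1))
      ((fun x => x + (-(1/2):ℝ)) ⁻¹' (s ∩ Ioc 0 (1/2))) := by
    rw [disjoint_left]
    rintro x ⟨-, -, hx1⟩ ⟨-, hx2, -⟩
    dsimp only at hx1 hx2
    linarith
  rw [measure_union hdisj (((hs.inter measurableSet_Ioc).preimage (measurable_add_const _))),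
    measure_preimage_add_right, measure_preimage_add_right]
  exact gr_glue s hs

/-- The third map preserves the uniform distribution on `[0,1]`. -/
lemma gr_map3 :
    (volume.restrict (Icc (0:ℝ) 1)).map
      (fun v => -2 * v + (Icc (0:ℝ) (1/2)).indicator (fun _ => (1:ℝ)) v
        + 2 * (Ioc (1/2 : ℝ) 1).indicator (fun _ => (1:ℝ)) v)
      = volume.restrict (Icc (0:ℝ) 1) := by
  set f : ℝ → ℝ := fun v => -2 * v + (Icc (0:ℝ) (1/2)).indicator (fun _ => (1:ℝ)) v
        + 2 * (Ioc (1/2 : ℝ) 1).indicator (fun _ => (1:ℝ)) v with hf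
  have hfm : Measurable f :=
    ((measurable_const.mul measurable_id).add
      (measurable_const.indicator measurableSet_Icc)).add
      (measurable_const.mul (measurable_const.indicator measurableSet_Ioc))
  ext s hs
  rw [Measure.map_apply hfm hs, Measure.restrict_apply (hfm hs), Measure.restrict_apply hs]
  have hset : f ⁻¹' s ∩ Icc 0 1 =
      ((fun x => (-2:ℝ) * x) ⁻¹' ((fun x => x + (1:ℝ)) ⁻¹' (s ∩ Icc 0 1))) ∪
      ((fun x => (-2:ℝ) * x) ⁻¹' ((fun x => x + (2:ℝ)) ⁻¹' (s ∩ Ico 0 1))) := by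
    ext v
    simp only [mem_inter_iff, mem_preimage, mem_Icc, mem_union, mem_Ico, hf]
    constructor
    · rintro ⟨hfs, h0, h1⟩
      rcases le_or_gt v (1/2) with hv | hv
      · have hA : (Icc (0:ℝ) (1/2)).indicator (fun _ => (1:ℝ)) v = 1 :=
          indicator_of_mem (mem_Icc.2 ⟨h0, hv⟩) _
        have hB : (Ioc (1/2:ℝ) 1).indicator (fun _ => (1:ℝ)) v = 0 :=
          indicator_of_notMem (fun h => absurd h.1 (not_lt.2 hv)) _
        rw [hA, hB] at hfs
        have : -2 * v + 1 + 2 * 0 = -2 * v + 1 := by ring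
        rw [this] at hfs
        exact Or.inl ⟨hfs, by linarith, by linarith⟩
      · have hA : (Icc (0:ℝ) (1/2)).indicator (fun _ => (1:ℝ)) v = 0 :=
          indicator_of_notMem (fun h => absurd h.2 (not_le.2 hv)) _
        have hB : (Ioc (1/2:ℝ) 1).indicator (fun _ => (1:ℝ)) v = 1 :=
          indicator_of_mem (mem_Ioc.2 ⟨hv, h1⟩) _
        rw [hA, hB] at hfs
        have : -2 * v + 0 + 2 * 1 = -2 * v + 2 := by ring
        rw [this] at hfs
        exact Or.inr ⟨hfs, by linarith, by linarith⟩
    · rintro (⟨hvs, h1, h2⟩ | ⟨hvs, h1, h2⟩)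
      · have h0 : 0 ≤ v := by linarith
        have hv : v ≤ 1/2 := by linarith
        have hA : (Icc (0:ℝ) (1/2)).indicator (fun _ => (1:ℝ)) v = 1 :=
          indicator_of_mem (mem_Icc.2 ⟨h0, hv⟩) _
        have hB : (Ioc (1/2:ℝ) 1).indicator (fun _ => (1:ℝ)) v = 0 :=
          indicator_of_notMem (fun h => absurd h.1 (not_lt.2 hv)) _
        rw [hA, hB]
        have : -2 * v + 1 + 2 * 0 = -2 * v + 1 := by ring
        rw [this]
        exact ⟨hvs, h0, by linarith⟩
      · have hv : 1/2 < v := by linarith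
        have h1' : v ≤ 1 := by linarith
        have hA : (Icc (0:ℝ) (1/2)).indicator (fun _ => (1:ℝ)) v = 0 :=
          indicator_of_notMem (fun h => absurd h.2 (not_le.2 hv)) _
        have hB : (Ioc (1/2:ℝ) 1).indicator (fun _ => (1:ℝ)) v = 1 :=
          indicator_of_mem (mem_Ioc.2 ⟨hv, h1'⟩) _
        rw [hA, hB]
        have : -2 * v + 0 + 2 * 1 = -2 * v + 2 := by ring
        rw [this]
        exact ⟨hvs, by linarith, h1'⟩
  rw [hset]
  have hdisj : Disjoint ((fun x => (-2:ℝ) * x) ⁻¹' ((fun x => x + (1:ℝ)) ⁻¹' (s ∩ Icc 0 1)))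
      ((fun x => (-2:ℝ) * x) ⁻¹' ((fun x => x + (2:ℝ)) ⁻¹' (s ∩ Ico 0 1))) := by
    rw [disjoint_left]
    rintro x ⟨-, hx1, -⟩ ⟨-, -, hx2⟩
    dsimp only at hx1 hx2
    linarith
  have hm2 : MeasurableSet ((fun x => (-2:ℝ) * x) ⁻¹' ((fun x => x + (2:ℝ)) ⁻¹' (s ∩ Ico 0 1))) :=
    ((hs.inter measurableSet_Ico).preimage (measurable_add_const _)).preimage
      (measurable_const_mul _)
  rw [measure_union hdisj hm2,
    Real.volume_preimage_mul_left (by norm_num : (-2:ℝ) ≠ 0),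
    Real.volume_preimage_mul_left (by norm_num : (-2:ℝ) ≠ 0),
    measure_preimage_add_right, measure_preimage_add_right]
  have hIco : volume (s ∩ Ico (0:ℝ) 1) = volume (s ∩ Icc 0 1) :=
    measure_congr ((ae_eq_refl s).inter Ico_ae_eq_Icc)
  rw [hIco, ← mul_add]
  have h2 : volume (s ∩ Icc (0:ℝ) 1) + volume (s ∩ Icc (0:ℝ) 1)
      = 2 * volume (s ∩ Icc (0:ℝ) 1) := by ring
  rw [h2, ← mul_assoc]
  have : ENNReal.ofReal |(-2:ℝ)⁻¹| * 2 = 1 := by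
    rw [show |(-2:ℝ)⁻¹| = 1/2 by norm_num,
      show (2:ENNReal) = ENNReal.ofReal 2 by norm_num,
      ← ENNReal.ofReal_mul (by norm_num)]
    norm_num
  rw [this, one_mul]

/-- The Gaffke–Rüschendorf strict 3-countermonotonic construction:
`U₁ = V`, `U₂ = V + ½·1_{[0,1/2]}(V) − ½·1_{(1/2,1]}(V)`,
`U₃ = −2V + 1_{[0,1/2]}(V) + 2·1_{(1/2,1]}(V)`.  All three are uniform on `[0,1]`
and they sum to `3/2` almost surely. -/
theorem gaffke_ruschendorf_3CTM {Ω : Type*} [MeasurableSpace Ω] (μ : Measure Ω)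
    [IsProbabilityMeasure μ] (V : Ω → ℝ) (hV : Measurable V)
    (hunif : μ.map V = volume.restrict (Icc (0:ℝ) 1))
    (U₁ U₂ U₃ : Ω → ℝ)
    (hU₁ : U₁ = fun ω => V ω)
    (hU₂ : U₂ = fun ω => V ω
      + (1/2) * (Icc (0:ℝ) (1/2)).indicator (fun _ => (1:ℝ)) (V ω)
      - (1/2) * (Ioc (1/2 : ℝ) 1).indicator (fun _ => (1:ℝ)) (V ω))
    (hU₃ : U₃ = fun ω => -2 * V ω
      + (Icc (0:ℝ) (1/2)).indicator (fun _ => (1:ℝ)) (V ω)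
      + 2 * (Ioc (1/2 : ℝ) 1).indicator (fun _ => (1:ℝ)) (V ω)) :
    μ.map U₁ = volume.restrict (Icc (0:ℝ) 1) ∧
    μ.map U₂ = volume.restrict (Icc (0:ℝ) 1) ∧
    μ.map U₃ = volume.restrict (Icc (0:ℝ) 1) ∧
    (∀ᵐ ω ∂μ, U₁ ω + U₂ ω + U₃ ω = 3/2) := by
  have hf₂m : Measurable (fun v : ℝ => v + (1/2) * (Icc (0:ℝ) (1/2)).indicator (fun _ => (1:ℝ)) v
        - (1/2) * (Ioc (1/2 : ℝ) 1).indicator (fun _ => (1:ℝ)) v) :=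
    (measurable_id.add (measurable_const.mul
      (measurable_const.indicator measurableSet_Icc))).sub
      (measurable_const.mul (measurable_const.indicator measurableSet_Ioc))
  have hf₃m : Measurable (fun v : ℝ => -2 * v + (Icc (0:ℝ) (1/2)).indicator (fun _ => (1:ℝ)) v
        + 2 * (Ioc (1/2 : ℝ) 1).indicator (fun _ => (1:ℝ)) v) :=
    ((measurable_const.mul measurable_id).add
      (measurable_const.indicator measurableSet_Icc)).add
      (measurable_const.mul (measurable_const.indicator measurableSet_Ioc))
  have hU₂' : U₂ = (fun v : ℝ => v + (1/2) * (Icc (0:ℝ) (1/2)).indicator (fun _ => (1:ℝ)) v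
        - (1/2) * (Ioc (1/2 : ℝ) 1).indicator (fun _ => (1:ℝ)) v) ∘ V := by rw [hU₂]; rfl
  have hU₃' : U₃ = (fun v : ℝ => -2 * v + (Icc (0:ℝ) (1/2)).indicator (fun _ => (1:ℝ)) v
        + 2 * (Ioc (1/2 : ℝ) 1).indicator (fun _ => (1:ℝ)) v) ∘ V := by rw [hU₃]; rfl
  refine ⟨by rw [hU₁]; exact hunif, ?_, ?_, ?_⟩
  · rw [hU₂', ← Measure.map_map hf₂m hV, hunif]
    exact gr_map2
  · rw [hU₃', ← Measure.map_map hf₃m hV, hunif]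
    exact gr_map3
  · have hmem : ∀ᵐ ω ∂μ, V ω ∈ Icc (0:ℝ) 1 := by
      have : μ (V ⁻¹' (Icc (0:ℝ) 1)ᶜ) = 0 := by
        rw [← Measure.map_apply hV measurableSet_Icc.compl, hunif,
          Measure.restrict_apply measurableSet_Icc.compl, compl_inter_self, measure_empty]
      filter_upwards [measure_eq_zero_iff_ae_notMem.1 this] with ω hω
      simpa using hω
    filter_upwards [hmem] with ω hω
    obtain ⟨h0, h1⟩ := hω
    rw [hU₁, hU₂, hU₃]
    dsimp only
    rcases le_or_gt (V ω) (1/2) with hv | hv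
    · have hA : (Icc (0:ℝ) (1/2)).indicator (fun _ => (1:ℝ)) (V ω) = 1 :=
        indicator_of_mem (mem_Icc.2 ⟨h0, hv⟩) _
      have hB : (Ioc (1/2:ℝ) 1).indicator (fun _ => (1:ℝ)) (V ω) = 0 :=
        indicator_of_notMem (fun h => absurd h.1 (not_lt.2 hv)) _
      rw [hA, hB]; ring
    · have hA : (Icc (0:ℝ) (1/2)).indicator (fun _ => (1:ℝ)) (V ω) = 0 :=
        indicator_of_notMem (fun h => absurd h.2 (not_le.2 hv)) _
      have hB : (Ioc (1/2:ℝ) 1).indicator (fun _ => (1:ℝ)) (V ω) = 1 :=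
        indicator_of_mem (mem_Ioc.2 ⟨hv, h1⟩) _
      rw [hA, hB]; ring
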